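/- EnKF matrix identity (iv): with the notation of the context, the gain difference satisfies Δ_K := K_t − K = (I_d − K_t·H)·(Q_t − Q)·H^⊤·S^{-1}. -/

import Mathlib

open Matrix

lemma posSemidef_add_posDef' {m : Type*} [Fintype m] {A B : Matrix m m ℝ}
    (hA : A.PosSemidef) (hB : B.PosDef) : (A + B).PosDef :=
  Matrix.PosDef.posSemidef_add hA hB

set_option maxHeartbeats 1000000 in
/-- EnKF matrix identity (iv): with `S = H·Q·Hᵀ + R`,
`K = Q·Hᵀ·S⁻¹`, `S_t = H·Q_t·Hᵀ + R` and `K_t = Q_t·Hᵀ·S_t⁻¹`, the gain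
difference satisfies `K_t − K = (I − K_t·H)·(Q_t − Q)·Hᵀ·S⁻¹`. -/
theorem enkf_matrix_identity_iv
    {d m : ℕ} (hd : 1 ≤ d) (hm : 1 ≤ m)
    (H : Matrix (Fin m) (Fin d) ℝ)
    (Q Qt : Matrix (Fin d) (Fin d) ℝ) (R : Matrix (Fin m) (Fin m) ℝ)
    (hQ : Q.PosDef) (hQt : Qt.PosDef) (hR : R.PosDef)
    (S St : Matrix (Fin m) (Fin m) ℝ)
    (hS : S = H * Q * Hᵀ + R) (hSt : St = H * Qt * Hᵀ + R)
    (K Kt : Matrix (Fin d) (Fin m) ℝ)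
    (hK : K = Q * Hᵀ * S⁻¹) (hKt : Kt = Qt * Hᵀ * St⁻¹) :
    Kt - K = (1 - Kt * H) * (Qt - Q) * Hᵀ * S⁻¹ := by
  have hSpd : S.PosDef := by
    rw [hS]
    refine posSemidef_add_posDef' ?_ hR
    have := hQ.posSemidef.mul_mul_conjTranspose_same H
    rwa [conjTranspose_eq_transpose_of_trivial] at this
  have hStpd : St.PosDef := by
    rw [hSt]
    refine posSemidef_add_posDef' ?_ hR
    have := hQt.posSemidef.mul_mul_conjTranspose_same H
    rwa [conjTranspose_eq_transpose_of_trivial] at this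
  have hSinv : S * S⁻¹ = 1 :=
    Matrix.mul_nonsing_inv S ((Matrix.isUnit_iff_isUnit_det S).mp hSpd.isUnit)
  have hStinv : St⁻¹ * St = 1 :=
    Matrix.nonsing_inv_mul St ((Matrix.isUnit_iff_isUnit_det St).mp hStpd.isUnit)
  have key : Kt = Qt * Hᵀ * S⁻¹ - Kt * (St - S) * S⁻¹ := by
    have h1 : Kt * St = Qt * Hᵀ := by
      rw [hKt, Matrix.mul_assoc, hStinv, Matrix.mul_one]
    have h2 : Kt * (St - S) * S⁻¹ = Qt * Hᵀ * S⁻¹ - Kt := by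
      calc Kt * (St - S) * S⁻¹
          = (Kt * St) * S⁻¹ - Kt * (S * S⁻¹) := by
            simp only [Matrix.mul_sub, Matrix.sub_mul, Matrix.mul_assoc]
        _ = Qt * Hᵀ * S⁻¹ - Kt := by rw [h1, hSinv, Matrix.mul_one]
    rw [h2, sub_sub_cancel]
  have hStS : H * (Qt - Q) * Hᵀ = St - S := by
    rw [hS, hSt, Matrix.mul_sub, Matrix.sub_mul]
    abel
  symm
  calc (1 - Kt * H) * (Qt - Q) * Hᵀ * S⁻¹
      = (Qt - Q) * Hᵀ * S⁻¹ - Kt * (H * (Qt - Q) * Hᵀ) * S⁻¹ := by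
        simp only [Matrix.sub_mul, Matrix.mul_sub, Matrix.one_mul, Matrix.mul_assoc]
        abel
    _ = Qt * Hᵀ * S⁻¹ - Kt * (St - S) * S⁻¹ - K := by
        rw [hStS, hK]
        simp only [Matrix.sub_mul]
        abel
    _ = Kt - K := by rw [← key]
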